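/- The one-point compactification of the deleted Tychonoff plank P = ((ω+1)×(ω₁+1)) \ {(ω,ω₁)} is not radial (indeed not Fréchet-Urysohn) at the point at infinity: no transfinite sequence in ω × ω₁ converges to the corner point (ω, ω₁) of (ω+1)×(ω₁+1), yet (ω, ω₁) is in the closure of ω × ω₁. -/

import Mathlib

open Filter Topology Set

universe u v

/-- `x` has a neighbourhood base in the subspace `S` well-ordered by reverse inclusion. -/
def HasWONhdsBase {X : Type u} [TopologicalSpace X] (x : X) (S : Set X) : Prop :=
  ∃ (o : Ordinal.{u}) (B : ↥(Set.Iio o) → Set X),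
    (∀ i, B i ⊆ S) ∧ (∀ i j, i ≤ j → B j ⊆ B i) ∧
    (𝓝[S] x).HasBasis (fun _ => True) B

/-- `X` is radial at `x`. -/
def RadialAt (X : Type u) [TopologicalSpace X] (x : X) : Prop :=
  ∀ A : Set X, x ∈ closure A →
    ∃ (o : Ordinal.{u}) (f : ↥(Set.Iio o) → X), o ≠ 0 ∧
      (∀ i, f i ∈ A) ∧ Filter.Tendsto f Filter.atTop (𝓝 x)
noncomputable def om1 : Ordinal.{0} := (Cardinal.aleph 1).ord

abbrev Plank : Type 1 := ↥(Set.Iic Ordinal.omega0.{0}) × ↥(Set.Iic om1)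

noncomputable def corner : Plank :=
  (⟨Ordinal.omega0, Set.self_mem_Iic⟩, ⟨om1, Set.self_mem_Iic⟩)

lemma om1_isLimit : Order.IsSuccLimit om1 := Cardinal.isSuccLimit_ord (Cardinal.aleph0_le_aleph 1)

theorem stmt8 :
    corner ∈ closure {p : Plank | (p.1 : Ordinal) < Ordinal.omega0 ∧ (p.2 : Ordinal) < om1} ∧
    ∀ (o : Ordinal.{1}) (f : ↥(Set.Iio o) → Plank), o ≠ 0 →
      (∀ i, ((f i).1 : Ordinal) < Ordinal.omega0 ∧ ((f i).2 : Ordinal) < om1) →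
      ¬ Filter.Tendsto f Filter.atTop (𝓝 corner) := by
  constructor
  · rw [mem_closure_iff_nhds]
    intro U hU
    rw [nhds_prod_eq, Filter.mem_prod_iff] at hU
    obtain ⟨V₁, hV₁, V₂, hV₂, hVU⟩ := hU
    rw [nhds_subtype_eq_comap, Filter.mem_comap] at hV₁ hV₂
    obtain ⟨W₁, hW₁, hW₁'⟩ := hV₁
    obtain ⟨W₂, hW₂, hW₂'⟩ := hV₂
    obtain ⟨a, ha, haW⟩ := (SuccOrder.hasBasis_nhds_Ioc_of_exists_lt ⟨0, Ordinal.omega0_pos⟩).mem_iff.mp hW₁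
    obtain ⟨b, hb, hbW⟩ := (SuccOrder.hasBasis_nhds_Ioc_of_exists_lt ⟨0, om1_isLimit.pos⟩).mem_iff.mp hW₂
    have ha1 : a + 1 < Ordinal.omega0 := Ordinal.isSuccLimit_omega0.succ_lt ha
    have hb1 : b + 1 < om1 := om1_isLimit.succ_lt hb
    refine ⟨(⟨a + 1, ha1.le⟩, ⟨b + 1, hb1.le⟩), ?_, ha1, hb1⟩
    apply hVU
    exact ⟨hW₁' (haW ⟨Order.lt_succ a, ha1.le⟩), hW₂' (hbW ⟨Order.lt_succ b, hb1.le⟩)⟩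
  · intro o f ho hf htend
    have hne : Nonempty ↥(Set.Iio o) := ⟨⟨0, pos_iff_ne_zero.mpr ho⟩⟩
    -- for each n, eventually first coordinate > n
    have h1 : ∀ n : ℕ, ∃ j, ∀ i ≥ j, (n : Ordinal) < ((f i).1 : Ordinal) := by
      intro n
      have hopen : IsOpen {p : Plank | (n : Ordinal) < (p.1 : Ordinal)} :=
        (isOpen_Ioi).preimage (continuous_subtype_val.comp continuous_fst)
      have hmem : corner ∈ {p : Plank | (n : Ordinal) < (p.1 : Ordinal)} :=
        Ordinal.nat_lt_omega0 n
      exact Filter.eventually_atTop.mp (htend.eventually (hopen.mem_nhds hmem))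
    choose j hj using h1
    -- cofinality: every index is below some j n
    have hcof : ∀ i, ∃ n : ℕ, i < j n := by
      intro i
      obtain ⟨n, hn⟩ := Ordinal.lt_omega0.mp (hf i).1
      refine ⟨n, ?_⟩
      by_contra hle
      exact absurd (hj n i (not_lt.mp hle)) (by rw [hn]; exact lt_irrefl _)
    -- sup of second coordinates along j is < om1
    set β : Ordinal.{0} := ⨆ n : ℕ, ((f (j n)).2 : Ordinal) with hβ
    have hβlt : β < om1 := by
      apply Cardinal.iSup_lt_ord_of_isRegular Cardinal.isRegular_aleph_one
      · exact Cardinal.mk_nat ▸ Cardinal.aleph0_lt_aleph_one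
      · exact fun n => (hf (j n)).2
    have hopen : IsOpen {p : Plank | β < (p.2 : Ordinal)} :=
      (isOpen_Ioi).preimage (continuous_subtype_val.comp continuous_snd)
    have hmem : corner ∈ {p : Plank | β < (p.2 : Ordinal)} := hβlt
    obtain ⟨k, hk⟩ := Filter.eventually_atTop.mp (htend.eventually (hopen.mem_nhds hmem))
    obtain ⟨n, hn⟩ := hcof k
    have h1 : β < ((f (j n)).2 : Ordinal) := hk (j n) hn.le
    have h2 : ((f (j n)).2 : Ordinal) ≤ β := le_ciSup (f := fun n => ((f (j n)).2 : Ordinal))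
      (Ordinal.bddAbove_range _) n
    exact absurd (h1.trans_le h2) (lt_irrefl _)
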